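/- arXiv:1703.01748 — 2 statements merged into one kernel-verified Lean document; each statement's English description precedes it below -/
import Mathlib

section
/- For any irrational real number α, the inequality |α − p/q| ≤ 1/(√5·q²) has infinitely many rational solutions p/q (p ∈ ℤ, q ∈ ℕ, q ≥ 1). -/
noncomputable def cq (α : ℝ) : ℕ → ℝ
  | 0 => α
  | n+1 => (Int.fract (cq α n))⁻¹

noncomputable def aq (α : ℝ) (n : ℕ) : ℤ := ⌊cq α n⌋

noncomputable def qd (α : ℝ) : ℕ → ℤ
  | 0 => 0
  | 1 => 1
  | n+2 => aq α (n+1) * qd α (n+1) + qd α n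

noncomputable def pn (α : ℝ) : ℕ → ℤ
  | 0 => 1
  | 1 => aq α 0
  | n+2 => aq α (n+1) * pn α (n+1) + pn α n

noncomputable def ee (α : ℝ) (n : ℕ) : ℝ :=
  cq α (n+1) * (qd α (n+1) : ℝ) + (qd α n : ℝ)

variable {α : ℝ}

lemma cq_irr (hα : Irrational α) : ∀ n, Irrational (cq α n) := by
  intro n
  induction n with
  | zero => exact hα
  | succ n ih =>
      have h1 : Irrational (Int.fract (cq α n)) := by
        rw [← Int.self_sub_floor]
        exact ih.sub_intCast _
      simpa [cq] using h1.inv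

lemma fract_pos (hα : Irrational α) (n : ℕ) : 0 < Int.fract (cq α n) :=
  Int.fract_pos.mpr ((cq_irr hα n).ne_int _)

lemma cq_gt_one (hα : Irrational α) (n : ℕ) : 1 < cq α (n+1) := by
  rw [cq]
  exact (one_lt_inv_iff₀).mpr ⟨fract_pos hα n, Int.fract_lt_one _⟩

lemma aq_ge_one (hα : Irrational α) (n : ℕ) : 1 ≤ aq α (n+1) := by
  have := cq_gt_one hα n
  rw [aq]
  exact Int.le_floor.mpr (by exact_mod_cast this.le)

lemma cq_rec (hα : Irrational α) (n : ℕ) :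
    cq α n = (aq α n : ℝ) + (cq α (n+1))⁻¹ := by
  have h : (cq α (n+1))⁻¹ = Int.fract (cq α n) := by
    rw [cq, inv_inv]
  rw [h, aq, Int.floor_add_fract]

lemma cq_mul (hα : Irrational α) (n : ℕ) :
    cq α n * cq α (n+1) = (aq α n : ℝ) * cq α (n+1) + 1 := by
  have hne : cq α (n+1) ≠ 0 := by
    have := cq_gt_one hα n; linarith
  rw [cq_rec hα n]
  field_simp

lemma qd_pos : ∀ n : ℕ, Irrational α → 0 ≤ qd α n ∧ 1 ≤ qd α (n+1)
  | 0, _ => by simp [qd]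
  | (n+1), hα => by
      obtain ⟨h0, h1⟩ := qd_pos n hα
      refine ⟨by linarith, ?_⟩
      show 1 ≤ aq α (n+1) * qd α (n+1) + qd α n
      have := aq_ge_one hα n
      nlinarith

lemma qd_ge : ∀ n : ℕ, Irrational α → (n : ℤ) ≤ qd α (n+1)
  | 0, _ => by simp [qd]
  | 1, hα => by simpa [qd] using aq_ge_one hα 0
  | (n+2), hα => by
      have ih := qd_ge (n+1) hα
      have h1 := (qd_pos n hα).2
      have ha := aq_ge_one hα (n+1)
      have h2 := (qd_pos (n+1) hα).2
      show (n+2 : ℤ) ≤ aq α (n+2) * qd α (n+2) + qd α (n+1)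
      push_cast at ih ⊢
      nlinarith

lemma ee_pos (hα : Irrational α) (n : ℕ) : 0 < ee α n := by
  have h1 := cq_gt_one hα n
  have h2 : (1:ℝ) ≤ (qd α (n+1) : ℝ) := by exact_mod_cast (qd_pos n hα).2
  have h3 : (0:ℝ) ≤ (qd α n : ℝ) := by exact_mod_cast (qd_pos n hα).1
  rw [ee]; nlinarith

lemma key (hα : Irrational α) : ∀ n : ℕ,
    α * ee α n = cq α (n+1) * (pn α (n+1) : ℝ) + (pn α n : ℝ) := by
  intro n
  induction n with
  | zero =>
      have h := cq_mul hα 0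
      simp only [show cq α 0 = α from rfl] at h
      simp only [ee, qd, pn]
      push_cast
      linear_combination h
  | succ n ih =>
      have h2 := cq_mul hα (n+1)
      show α * ee α (n+1) = cq α (n+2) * (pn α (n+2) : ℝ) + (pn α (n+1) : ℝ)
      rw [ee, show qd α (n+2) = aq α (n+1) * qd α (n+1) + qd α n from rfl,
        show pn α (n+2) = aq α (n+1) * pn α (n+1) + pn α n from rfl]
      rw [ee] at ih
      push_cast
      linear_combination cq α (n+2) * ih +
        ((pn α (n+1) : ℝ) - α * (qd α (n+1) : ℝ)) * h2

lemma det : ∀ n : ℕ, pn α (n+1) * qd α n - pn α n * qd α (n+1) = (-1)^(n+1)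
  | 0 => by simp [pn, qd]
  | (n+1) => by
      have ih := det n
      show (aq α (n+1) * pn α (n+1) + pn α n) * qd α (n+1)
          - pn α (n+1) * (aq α (n+1) * qd α (n+1) + qd α n) = (-1)^(n+2)
      rw [pow_succ (-1 : ℤ) (n+1)]
      linear_combination (-1 : ℤ) * ih

lemma err (hα : Irrational α) (n : ℕ) :
    α - (pn α (n+1) : ℝ) / (qd α (n+1) : ℝ) = (-1)^n / ((qd α (n+1) : ℝ) * ee α n) := by
  have hq : (0:ℝ) < (qd α (n+1) : ℝ) := by exact_mod_cast lt_of_lt_of_le one_pos (qd_pos n hα).2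
  have hE := ee_pos hα n
  have hk := key hα n
  have hd : ((pn α (n+1)):ℝ) * (qd α n : ℝ) - (pn α n : ℝ) * (qd α (n+1) : ℝ)
      = (-1:ℝ)^(n+1) := by exact_mod_cast det (α := α) n
  rw [ee] at hk hE ⊢
  have hq' : ((qd α (n+1)):ℝ) ≠ 0 := ne_of_gt hq
  have hsplit : α - (pn α (n+1):ℝ)/(qd α (n+1):ℝ)
      = (α * (qd α (n+1):ℝ) - (pn α (n+1):ℝ)) / (qd α (n+1):ℝ) := by
    field_simp
  rw [hsplit, div_eq_div_iff hq' (by positivity : ((qd α (n+1)):ℝ) * (cq α (n+1) * ((qd α (n+1)):ℝ) + ((qd α n):ℝ)) ≠ 0)]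
  rw [pow_succ] at hd
  linear_combination ((qd α (n+1)):ℝ)^2 * hk - ((qd α (n+1)):ℝ) * hd

lemma abs_err (hα : Irrational α) (n : ℕ) :
    |α - (pn α (n+1) : ℝ) / (qd α (n+1) : ℝ)| = 1 / ((qd α (n+1) : ℝ) * ee α n) := by
  have hq : (0:ℝ) < (qd α (n+1) : ℝ) := by exact_mod_cast lt_of_lt_of_le one_pos (qd_pos n hα).2
  have hE := ee_pos hα n
  rw [err hα n, abs_div, abs_pow, abs_neg, abs_one, one_pow, abs_of_pos (by positivity)]

lemma ee_chain (hα : Irrational α) (n : ℕ) :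
    ee α n * cq α (n+2) = ee α (n+1) := by
  have h := cq_mul hα (n+1)
  rw [ee, ee, show qd α (n+2) = aq α (n+1) * qd α (n+1) + qd α n from rfl]
  push_cast
  linear_combination ((qd α (n+1)):ℝ) * h

lemma ee_sum (hα : Irrational α) (n : ℕ) :
    (qd α (n+2) : ℝ) * ee α (n+1) + (qd α (n+1) : ℝ) * ee α n = ee α n * ee α (n+1) := by
  have hc := ee_chain hα n
  have hdef : ee α (n+1) = cq α (n+2) * (qd α (n+2) : ℝ) + (qd α (n+1) : ℝ) := rfl
  linear_combination (-(ee α n)) * hdef - ((qd α (n+2)):ℝ) * hc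

lemma quad_bound {u v s : ℝ} (hs : s * s = 5) (hu : 0 < u)
    (h : u * u + v * v < s * u * v) : v < (1 + s) / 2 * u := by
  by_contra hc
  push_neg at hc
  have h1 : (0:ℝ) ≤ v - (1 + s) / 2 * u := by linarith
  have h2 : (0:ℝ) ≤ v - (s - 1) / 2 * u := by linarith
  nlinarith [mul_nonneg h1 h2, hs, sq_nonneg u, mul_pos hu hu]

lemma two_fail (hα : Irrational α) (n : ℕ)
    (h1 : ee α n < Real.sqrt 5 * (qd α (n+1) : ℝ))
    (h2 : ee α (n+1) < Real.sqrt 5 * (qd α (n+2) : ℝ)) :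
    (qd α (n+2) : ℝ) < (1 + Real.sqrt 5) / 2 * (qd α (n+1) : ℝ) := by
  set s := Real.sqrt 5 with hs
  have hs5 : s * s = 5 := Real.mul_self_sqrt (by norm_num)
  have hq1 : (0:ℝ) < (qd α (n+1) : ℝ) := by exact_mod_cast lt_of_lt_of_le one_pos (qd_pos n hα).2
  have hq2 : (0:ℝ) < (qd α (n+2) : ℝ) := by exact_mod_cast lt_of_lt_of_le one_pos (qd_pos (n+1) hα).2
  have hE1 := ee_pos hα n
  have hE2 := ee_pos hα (n+1)
  have hsum := ee_sum hα n
  have key : (qd α (n+1) : ℝ) * (qd α (n+1) : ℝ) + (qd α (n+2) : ℝ) * (qd α (n+2) : ℝ)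
      < s * (qd α (n+1) : ℝ) * (qd α (n+2) : ℝ) := by
    nlinarith [mul_pos (sub_pos.mpr h1) (mul_pos (mul_pos hq2 hq2) hE2),
      mul_pos (sub_pos.mpr h2) (mul_pos (mul_pos hq1 hq1) hE1),
      mul_pos hE1 hE2]
  exact quad_bound hs5 hq1 (by nlinarith)

lemma good (hα : Irrational α) (n : ℕ) :
    ∃ m, n ≤ m ∧ Real.sqrt 5 * (qd α (m+1) : ℝ) ≤ ee α m := by
  by_contra hcon
  push_neg at hcon
  have f0 := hcon n le_rfl
  have f1 := hcon (n+1) (by omega)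
  have f2 := hcon (n+2) (by omega)
  have t1 := two_fail hα n f0 f1
  have t2 := two_fail hα (n+1) f1 f2
  have hs5 : Real.sqrt 5 * Real.sqrt 5 = 5 := Real.mul_self_sqrt (by norm_num)
  have hq1 : (1:ℝ) ≤ (qd α (n+1) : ℝ) := by exact_mod_cast (qd_pos n hα).2
  have hq2 : (1:ℝ) ≤ (qd α (n+2) : ℝ) := by exact_mod_cast (qd_pos (n+1) hα).2
  have ha : (1:ℝ) ≤ (aq α (n+2) : ℝ) := by exact_mod_cast aq_ge_one hα (n+1)
  have hrec : (qd α (n+3) : ℝ) = (aq α (n+2) : ℝ) * (qd α (n+2) : ℝ) + (qd α (n+1) : ℝ) := by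
    rw [show qd α (n+3) = aq α (n+2) * qd α (n+2) + qd α (n+1) from rfl]; push_cast; ring
  have hge : (qd α (n+2) : ℝ) + (qd α (n+1) : ℝ) ≤ (qd α (n+3) : ℝ) := by
    rw [hrec]; nlinarith
  have hs1 : 1 < Real.sqrt 5 := by nlinarith [hs5, Real.sqrt_nonneg 5]
  have hpos : (0:ℝ) < (Real.sqrt 5 - 1)/2 := by linarith
  have hmul := mul_lt_mul_of_pos_left t1 hpos
  nlinarith [hs5, hmul, t2, hge, hq1, hq2]


/-- **Hurwitz's theorem (first part).** For any irrational real number `α`, the inequality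
`|α - p/q| ≤ 1/(√5 q²)` has infinitely many rational solutions `p/q`
(`p ∈ ℤ`, `q ∈ ℕ`, `q ≥ 1`). -/
theorem hurwitz_infinitely_many_rational_approximations (α : ℝ) (hα : Irrational α) :
    {r : ℚ | ∃ (p : ℤ) (q : ℕ), 1 ≤ q ∧ (r : ℝ) = (p : ℝ) / (q : ℝ) ∧
      |α - (p : ℝ) / (q : ℝ)| ≤ 1 / (Real.sqrt 5 * (q : ℝ) ^ 2)}.Infinite := by
  set S := {r : ℚ | ∃ (p : ℤ) (q : ℕ), 1 ≤ q ∧ (r : ℝ) = (p : ℝ) / (q : ℝ) ∧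
      |α - (p : ℝ) / (q : ℝ)| ≤ 1 / (Real.sqrt 5 * (q : ℝ) ^ 2)} with hSdef
  have hs0 : (0:ℝ) < Real.sqrt 5 := Real.sqrt_pos.mpr (by norm_num)
  have hqpos : ∀ m : ℕ, (0:ℝ) < (qd α (m+1) : ℝ) := fun m => by
    exact_mod_cast lt_of_lt_of_le one_pos (qd_pos m hα).2
  have hcast : ∀ m : ℕ, (((qd α (m+1)).toNat : ℕ) : ℝ) = (qd α (m+1) : ℝ) := fun m => by
    have h1 : ((qd α (m+1)).toNat : ℤ) = qd α (m+1) :=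
      Int.toNat_of_nonneg (le_trans zero_le_one (qd_pos m hα).2)
    exact_mod_cast congrArg (fun z : ℤ => (z : ℝ)) h1
  have mem : ∀ m : ℕ, Real.sqrt 5 * (qd α (m+1) : ℝ) ≤ ee α m →
      ((pn α (m+1) : ℚ) / (qd α (m+1) : ℚ)) ∈ S := by
    intro m hm
    refine ⟨pn α (m+1), (qd α (m+1)).toNat, ?_, ?_, ?_⟩
    · have := (qd_pos m hα).2; omega
    · rw [hcast m]; push_cast; ring
    · rw [hcast m, abs_err hα m]
      apply one_div_le_one_div_of_le (mul_pos hs0 (pow_pos (hqpos m) 2))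
      have := ee_pos hα m
      nlinarith [mul_le_mul_of_nonneg_left hm (hqpos m).le]
  by_contra hinf
  rw [Set.not_infinite] at hinf
  classical
  set T : Finset ℝ := hinf.toFinset.image (fun r : ℚ => |α - (r : ℝ)|) with hT
  have hTne : T.Nonempty := by
    obtain ⟨m, _, hg⟩ := good hα 0
    exact ⟨_, Finset.mem_image_of_mem _ (hinf.mem_toFinset.mpr (mem m hg))⟩
  obtain ⟨ε, hεT, hεmin⟩ : ∃ x ∈ T, ∀ y ∈ T, x ≤ y :=
    ⟨T.min' hTne, T.min'_mem hTne, fun y hy => T.min'_le y hy⟩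
  have hεpos : 0 < ε := by
    rw [hT] at hεT
    simp only [Finset.mem_image] at hεT
    obtain ⟨r, _, hr⟩ := hεT
    rw [← hr]
    exact abs_pos.mpr (sub_ne_zero.mpr (hα.ne_rat r))
  obtain ⟨N, hN⟩ := exists_nat_gt (1 / (Real.sqrt 5 * ε))
  have hN0 : (0:ℝ) < (N:ℝ) := lt_of_le_of_lt (by positivity) hN
  have hN1 : (1:ℝ) ≤ (N:ℝ) := by exact_mod_cast Nat.one_le_iff_ne_zero.mpr (by
    intro h; rw [h] at hN0; simp at hN0)
  obtain ⟨m, hmN, hg⟩ := good hα N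
  have hrS := mem m hg
  have hεle : ε ≤ |α - ((((pn α (m+1) : ℚ) / (qd α (m+1) : ℚ)) : ℚ) : ℝ)| :=
    hεmin _ (Finset.mem_image_of_mem _ (hinf.mem_toFinset.mpr hrS))
  have hcast2 : ((((pn α (m+1) : ℚ) / (qd α (m+1) : ℚ)) : ℚ) : ℝ)
      = (pn α (m+1) : ℝ) / (qd α (m+1) : ℝ) := by push_cast; ring
  rw [hcast2, abs_err hα m] at hεle
  have hqN : (N:ℝ) ≤ (qd α (m+1) : ℝ) := by
    have h1 : (m : ℤ) ≤ qd α (m+1) := qd_ge m hα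
    have h2 : (N:ℝ) ≤ (m:ℝ) := by exact_mod_cast hmN
    have h3 : ((m:ℤ):ℝ) ≤ (qd α (m+1) : ℝ) := by exact_mod_cast h1
    push_cast at h3
    linarith
  -- 1/(q * ee) ≤ 1/(sqrt 5 * q^2) ≤ 1/(sqrt 5 * N^2) < ε
  have hEpos := ee_pos hα m
  have b1 : 1 / ((qd α (m+1) : ℝ) * ee α m) ≤ 1 / (Real.sqrt 5 * (qd α (m+1) : ℝ)^2) := by
    apply one_div_le_one_div_of_le (mul_pos hs0 (pow_pos (hqpos m) 2))
    nlinarith [mul_le_mul_of_nonneg_left hg (hqpos m).le]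
  have b2 : 1 / (Real.sqrt 5 * (qd α (m+1) : ℝ)^2) ≤ 1 / (Real.sqrt 5 * (N:ℝ)^2) := by
    apply one_div_le_one_div_of_le (mul_pos hs0 (pow_pos hN0 2))
    have : (N:ℝ)^2 ≤ (qd α (m+1) : ℝ)^2 := by nlinarith
    nlinarith
  have b3 : 1 / (Real.sqrt 5 * (N:ℝ)^2) < ε := by
    rw [div_lt_iff₀ (by positivity)]
    rw [div_lt_iff₀ (by positivity)] at hN
    nlinarith
  linarith
end

section
/- For every ε > 0, the inequality |(1+√5)/2 − p/q| ≤ 1/((√5+ε)·q²) has only finitely many rational solutions p/q (p ∈ ℤ, q ∈ ℕ, q ≥ 1). -/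
lemma hurwitz_aux_ne (p : ℤ) (q : ℕ) (hq : 1 ≤ q) : p ^ 2 - p * q - (q : ℤ) ^ 2 ≠ 0 := by
  intro h
  have hq0 : (0 : ℝ) < (q : ℝ) := by exact_mod_cast Nat.lt_of_lt_of_le Nat.zero_lt_one hq
  have hirr : Irrational (Real.sqrt 5) := by
    have := (by norm_num : Nat.Prime 5).irrational_sqrt
    simpa using this
  have h5 : Real.sqrt 5 ^ 2 = 5 := Real.sq_sqrt (by norm_num)
  have hr : (p : ℝ) ^ 2 - (p : ℝ) * q - (q : ℝ) ^ 2 = 0 := by exact_mod_cast h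
  set x : ℝ := (p : ℝ) / q with hx
  have hx2 : x ^ 2 - x - 1 = 0 := by
    rw [hx]; field_simp
    nlinarith [hr]
  have hzero : (2 * x - 1 - Real.sqrt 5) * (2 * x - 1 + Real.sqrt 5) = 0 := by nlinarith
  rcases mul_eq_zero.mp hzero with h' | h'
  · exact hirr ⟨2 * ((p : ℚ) / (q : ℚ)) - 1, by push_cast; linarith⟩
  · exact hirr ⟨1 - 2 * ((p : ℚ) / (q : ℚ)), by push_cast; linarith⟩

set_option maxHeartbeats 1000000 in
/-- **Hurwitz's theorem (second part).** For every `ε > 0`, the inequality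
`|(1+√5)/2 - p/q| ≤ 1/((√5+ε) q²)` has only finitely many rational solutions `p/q`
(`p ∈ ℤ`, `q ∈ ℕ`, `q ≥ 1`). -/
theorem hurwitz_golden_ratio_finitely_many_solutions (ε : ℝ) (hε : 0 < ε) :
    {r : ℚ | ∃ (p : ℤ) (q : ℕ), 1 ≤ q ∧ (r : ℝ) = (p : ℝ) / (q : ℝ) ∧
      |(1 + Real.sqrt 5) / 2 - (p : ℝ) / (q : ℝ)| ≤
        1 / ((Real.sqrt 5 + ε) * (q : ℝ) ^ 2)}.Finite := by
  have h5 : Real.sqrt 5 ^ 2 = 5 := Real.sq_sqrt (by norm_num)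
  have h5gt : (2 : ℝ) < Real.sqrt 5 := by nlinarith [Real.sqrt_nonneg 5]
  have h5lt : Real.sqrt 5 < 3 := by nlinarith [Real.sqrt_nonneg 5]
  set N : ℕ := ⌈1 / (Real.sqrt 5 * ε)⌉₊ with hNdef
  apply Set.Finite.subset
    (((Finset.Icc (-(3 * (N : ℤ))) (3 * N) ×ˢ Finset.Icc 1 N).image
      (fun pq : ℤ × ℕ => (pq.1 : ℚ) / (pq.2 : ℚ))).finite_toSet)
  rintro r ⟨p, q, hq, hrpq, hineq⟩
  have hq0 : (0 : ℝ) < (q : ℝ) := by exact_mod_cast Nat.lt_of_lt_of_le Nat.zero_lt_one hq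
  have hq1 : (1 : ℝ) ≤ (q : ℝ) := by exact_mod_cast hq
  set x : ℝ := (p : ℝ) / q with hx
  set φ : ℝ := (1 + Real.sqrt 5) / 2 with hφ
  set ψ : ℝ := (1 - Real.sqrt 5) / 2 with hψ
  -- lower bound on the product
  have hne : p ^ 2 - p * q - (q : ℤ) ^ 2 ≠ 0 := hurwitz_aux_ne p q hq
  have hge1 : (1 : ℝ) ≤ |(p : ℝ) ^ 2 - (p : ℝ) * q - (q : ℝ) ^ 2| := by
    have : (1 : ℤ) ≤ |p ^ 2 - p * q - (q : ℤ) ^ 2| := Int.one_le_abs hne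
    exact_mod_cast this
  have hprodval : (φ - x) * (ψ - x) = x ^ 2 - x - 1 := by
    simp only [hφ, hψ]; ring_nf; nlinarith
  have hq2 : (0 : ℝ) < (q : ℝ) ^ 2 := by positivity
  have hxval : x ^ 2 - x - 1 = ((p : ℝ) ^ 2 - (p : ℝ) * q - (q : ℝ) ^ 2) / (q : ℝ) ^ 2 := by
    rw [hx]; field_simp
  have hprod : 1 / (q : ℝ) ^ 2 ≤ |φ - x| * |ψ - x| := by
    rw [← abs_mul, hprodval, hxval, abs_div, abs_of_pos hq2]
    gcongr
  -- abbreviations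
  have hden : (0 : ℝ) < (Real.sqrt 5 + ε) * (q : ℝ) ^ 2 := by positivity
  have hB : |φ - x| ≤ 1 / ((Real.sqrt 5 + ε) * (q : ℝ) ^ 2) := hineq
  have hpsi : |ψ - x| ≤ Real.sqrt 5 + |φ - x| := by
    have : ψ - x = (φ - x) - Real.sqrt 5 := by simp [hφ, hψ]; ring
    rw [this]
    calc |(φ - x) - Real.sqrt 5| ≤ |φ - x| + |Real.sqrt 5| := abs_sub _ _
      _ = Real.sqrt 5 + |φ - x| := by
          rw [abs_of_nonneg (Real.sqrt_nonneg 5)]; ring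
  have habs0 : 0 ≤ |φ - x| := abs_nonneg _
  -- deduce ε ≤ 1/((√5+ε) q²)
  have hkey : ε ≤ 1 / ((Real.sqrt 5 + ε) * (q : ℝ) ^ 2) := by
    have h1 : 1 / (q : ℝ) ^ 2 ≤ |φ - x| * (Real.sqrt 5 + |φ - x|) := by
      calc 1 / (q : ℝ) ^ 2 ≤ |φ - x| * |ψ - x| := hprod
        _ ≤ |φ - x| * (Real.sqrt 5 + |φ - x|) := by
            exact mul_le_mul_of_nonneg_left hpsi habs0
    set B : ℝ := 1 / ((Real.sqrt 5 + ε) * (q : ℝ) ^ 2) with hBdef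
    have hBpos : 0 < B := by positivity
    have h2 : 1 / (q : ℝ) ^ 2 ≤ B * (Real.sqrt 5 + B) := by
      calc 1 / (q : ℝ) ^ 2 ≤ |φ - x| * (Real.sqrt 5 + |φ - x|) := h1
        _ ≤ B * (Real.sqrt 5 + B) := by nlinarith [Real.sqrt_nonneg 5]
    have hBval : B * ((Real.sqrt 5 + ε) * (q : ℝ) ^ 2) = 1 := by
      rw [hBdef]; field_simp
    have h3 : Real.sqrt 5 + ε ≤ Real.sqrt 5 + B := by
      calc Real.sqrt 5 + ε
          = 1 / (q : ℝ) ^ 2 * ((Real.sqrt 5 + ε) * (q : ℝ) ^ 2) := by field_simp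
        _ ≤ B * (Real.sqrt 5 + B) * ((Real.sqrt 5 + ε) * (q : ℝ) ^ 2) :=
            mul_le_mul_of_nonneg_right h2 hden.le
        _ = (Real.sqrt 5 + B) * (B * ((Real.sqrt 5 + ε) * (q : ℝ) ^ 2)) := by ring
        _ = Real.sqrt 5 + B := by rw [hBval]; ring
    linarith
  -- bound q
  have hq2bound : Real.sqrt 5 * ε * (q : ℝ) ^ 2 ≤ 1 := by
    have h1 : ε * ((Real.sqrt 5 + ε) * (q : ℝ) ^ 2) ≤ 1 := by
      have := mul_le_mul_of_nonneg_right hkey (le_of_lt hden)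
      calc ε * ((Real.sqrt 5 + ε) * (q : ℝ) ^ 2)
          ≤ 1 / ((Real.sqrt 5 + ε) * (q : ℝ) ^ 2) * ((Real.sqrt 5 + ε) * (q : ℝ) ^ 2) := this
        _ = 1 := by field_simp
    nlinarith [hq2]
  have hqN : q ≤ N := by
    have h1 : (q : ℝ) ≤ 1 / (Real.sqrt 5 * ε) := by
      rw [le_div_iff₀ (by positivity)]
      nlinarith [hq1, hq2bound]
    have h2 : (q : ℝ) ≤ (N : ℝ) := h1.trans (Nat.le_ceil _)
    exact_mod_cast h2
  -- bound p
  have hdle1 : |φ - x| ≤ 1 := by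
    calc |φ - x| ≤ 1 / ((Real.sqrt 5 + ε) * (q : ℝ) ^ 2) := hB
      _ ≤ 1 := by
          rw [div_le_one hden]
          nlinarith [hq1]
  have hxbd : |x| ≤ 3 := by
    have : |x| ≤ |φ| + |φ - x| := by
      calc |x| = |φ - (φ - x)| := by ring_nf
        _ ≤ |φ| + |φ - x| := abs_sub _ _
    have hφbd : |φ| ≤ 2 := by
      rw [abs_of_nonneg (by simp [hφ]; nlinarith [Real.sqrt_nonneg 5])]
      simp [hφ]; nlinarith
    linarith
  have hpbd : -(3 * (N : ℤ)) ≤ p ∧ p ≤ 3 * N := by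
    have hxq : |(p : ℝ)| ≤ 3 * (q : ℝ) := by
      have := abs_div (p : ℝ) (q : ℝ)
      rw [hx] at hxbd
      rw [this, abs_of_pos hq0, div_le_iff₀ hq0] at hxbd
      linarith
    have hNq : (q : ℝ) ≤ (N : ℝ) := by exact_mod_cast hqN
    have : |(p : ℝ)| ≤ 3 * (N : ℝ) := by linarith
    have hint : |p| ≤ 3 * (N : ℤ) := by exact_mod_cast this
    constructor
    · linarith [neg_abs_le p]
    · linarith [le_abs_self p]
  -- membership
  simp only [Finset.coe_image, Set.mem_image, Finset.mem_coe, Finset.mem_product,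
    Finset.mem_Icc]
  refine ⟨(p, q), ⟨⟨hpbd.1, hpbd.2⟩, hq, hqN⟩, ?_⟩
  have : ((((p : ℚ) / (q : ℚ)) : ℚ) : ℝ) = (r : ℝ) := by push_cast; rw [hrpq]
  exact_mod_cast this
end
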